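/- Let ℓ ≥ 4 be even and let α ≥ 1 and t ≥ 1 be integers with α ≥ 2t + 2ℓ − 2. In the integers ℤ, let I₁ = {2γ+1 : 0 ≤ γ ≤ α}, I₂ = {2α+5+2θ : 0 ≤ θ ≤ t}, I₃ = {2α+4t+9}, S⁺ = I₁ ∪ I₂ ∪ I₃, and M = ℓ(2α+4t+9). Then the ℓ-fold sumset ℓS⁺ equals [ℓ, M]_e \ ([M−2t−2, M−2]_e ∪ {M−4t−6}). -/

import Mathlib

/-- The `m`-fold sumset of `S`: all sums of `m` (not necessarily distinct) elements of `S`. -/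
def sumset {Γ : Type*} [AddCommMonoid Γ] (m : ℕ) (S : Set Γ) : Set Γ :=
  {x | ∃ f : Fin m → Γ, (∀ i, f i ∈ S) ∧ ∑ i, f i = x}

namespace Stmt5Aux

lemma zero_mem_sumset_zero {Γ : Type*} [AddCommMonoid Γ] (S : Set Γ) :
    (0 : Γ) ∈ sumset 0 S :=
  ⟨Fin.elim0, fun i => i.elim0, by simp⟩

lemma cons_mem {Γ : Type*} [AddCommMonoid Γ] {S : Set Γ} {s y : Γ} {k : ℕ}
    (hs : s ∈ S) (hy : y ∈ sumset k S) : s + y ∈ sumset (k + 1) S := by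
  obtain ⟨f, hf, hsum⟩ := hy
  exact ⟨Fin.cons s f, fun i => Fin.cases hs hf i, by rw [Fin.sum_cons, hsum]⟩

lemma add_mem {Γ : Type*} [AddCommMonoid Γ] {S : Set Γ} {a b : Γ} {m n : ℕ}
    (ha : a ∈ sumset m S) (hb : b ∈ sumset n S) : a + b ∈ sumset (m + n) S := by
  obtain ⟨f, hf, hfs⟩ := ha
  obtain ⟨g, hg, hgs⟩ := hb
  refine ⟨Fin.append f g, ?_, ?_⟩
  · intro i
    refine Fin.addCases (motive := fun i => Fin.append f g i ∈ S)
      (fun i => ?_) (fun i => ?_) i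
    · simp only [Fin.append_left]; exact hf i
    · simp only [Fin.append_right]; exact hg i
  · rw [Fin.sum_univ_add]
    simp only [Fin.append_left, Fin.append_right, hfs, hgs]

lemma sumset_mono {Γ : Type*} [AddCommMonoid Γ] {S T : Set Γ} (h : S ⊆ T) (k : ℕ) :
    sumset k S ⊆ sumset k T := fun _ ⟨f, hf, hs⟩ => ⟨f, fun i => h (hf i), hs⟩

lemma single_mem {Γ : Type*} [AddCommMonoid Γ] {S : Set Γ} {s : Γ} (hs : s ∈ S) :
    s ∈ sumset 1 S := ⟨fun _ => s, fun _ => hs, by simp⟩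

lemma const_mem {S : Set ℤ} {c : ℤ} (hc : c ∈ S) (k : ℕ) : (k : ℤ) * c ∈ sumset k S := by
  induction k with
  | zero => simpa using zero_mem_sumset_zero S
  | succ k ih =>
    have h : ((k + 1 : ℕ) : ℤ) * c = c + (k : ℤ) * c := by push_cast; ring
    rw [h]
    exact cons_mem hc ih

/-- sums of `k` elements from an arithmetic progression `c, c+2, ..., c+2w`. -/
lemma ap_mem (c w : ℤ) (hw : 0 ≤ w) :
    ∀ (k : ℕ) (E : ℤ), 0 ≤ E → E ≤ (k : ℤ) * w →
      (k : ℤ) * c + 2 * E ∈ sumset k {x : ℤ | ∃ j : ℤ, 0 ≤ j ∧ j ≤ w ∧ x = c + 2 * j} := by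
  intro k
  induction k with
  | zero =>
    intro E h1 h2
    have hE : E = 0 := le_antisymm (by simpa using h2) h1
    subst hE
    simpa using zero_mem_sumset_zero _
  | succ k ih =>
    intro E h1 h2
    have h2' : E ≤ (k : ℤ) * w + w := by push_cast at h2; linarith
    set j := min w E with hj
    have hj0 : 0 ≤ j := le_min hw h1
    have hjw : j ≤ w := min_le_left _ _
    have hjE : j ≤ E := min_le_right _ _
    have hrem : E - j ≤ (k : ℤ) * w := by
      rcases le_total w E with h | h
      · rw [hj, min_eq_left h]; linarith
      · rw [hj, min_eq_right h]
        simpa using mul_nonneg (by positivity) hw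
    have key : ((k + 1 : ℕ) : ℤ) * c + 2 * E = (c + 2 * j) + ((k : ℤ) * c + 2 * (E - j)) := by
      push_cast; ring
    rw [key]
    exact cons_mem ⟨j, hj0, hjw, rfl⟩ (ih (E - j) (by linarith) hrem)

lemma exists_k : ∀ (n : ℕ) (D m : ℤ), 0 < m → 1 ≤ D → D ≤ (n : ℤ) * m →
    ∃ k : ℕ, 1 ≤ k ∧ k ≤ n ∧ ((k : ℤ) - 1) * m < D ∧ D ≤ (k : ℤ) * m := by
  intro n
  induction n with
  | zero =>
    intro D m hm h1 h2
    exfalso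
    simp only [Nat.cast_zero, zero_mul] at h2
    omega
  | succ n ih =>
    intro D m hm h1 h2
    by_cases h : D ≤ (n : ℤ) * m
    · obtain ⟨k, hk1, hk2, hk3, hk4⟩ := ih D m hm h1 h
      exact ⟨k, hk1, by omega, hk3, hk4⟩
    · push_neg at h
      refine ⟨n + 1, by omega, le_refl _, ?_, ?_⟩
      · push_cast; linarith
      · push_cast; push_cast at h2; linarith

end Stmt5Aux

open Stmt5Aux in
theorem stmt5 (ℓ : ℕ) (α t : ℤ) (hℓe : Even ℓ) (hℓ : 4 ≤ ℓ) (hα : 1 ≤ α) (ht : 1 ≤ t)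
    (hαt : 2 * t + 2 * (ℓ : ℤ) - 2 ≤ α) :
    sumset ℓ
      ({x : ℤ | ∃ g : ℤ, 0 ≤ g ∧ g ≤ α ∧ x = 2 * g + 1} ∪
        {x : ℤ | ∃ θ : ℤ, 0 ≤ θ ∧ θ ≤ t ∧ x = 2 * α + 5 + 2 * θ} ∪
        {2 * α + 4 * t + 9}) =
      {x : ℤ | Even x ∧ (ℓ : ℤ) ≤ x ∧ x ≤ (ℓ : ℤ) * (2 * α + 4 * t + 9)} \
        ({x : ℤ | Even x ∧ (ℓ : ℤ) * (2 * α + 4 * t + 9) - 2 * t - 2 ≤ x ∧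
            x ≤ (ℓ : ℤ) * (2 * α + 4 * t + 9) - 2} ∪
          {(ℓ : ℤ) * (2 * α + 4 * t + 9) - 4 * t - 6}) := by
  set N : ℤ := 2 * α + 4 * t + 9 with hN
  set S : Set ℤ :=
      ({x : ℤ | ∃ g : ℤ, 0 ≤ g ∧ g ≤ α ∧ x = 2 * g + 1} ∪
        {x : ℤ | ∃ θ : ℤ, 0 ≤ θ ∧ θ ≤ t ∧ x = 2 * α + 5 + 2 * θ} ∪
        {2 * α + 4 * t + 9}) with hSdef
  have hNS : N ∈ S := Or.inr rfl
  have hℓz : (4 : ℤ) ≤ (ℓ : ℤ) := by exact_mod_cast hℓ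
  have hℓNe : Even ((ℓ : ℤ) * N) := by
    obtain ⟨r, hr⟩ := hℓe
    exact ⟨(r : ℤ) * N, by push_cast [hr]; ring⟩
  ext x
  simp only [Set.mem_diff, Set.mem_union, Set.mem_setOf_eq, Set.mem_singleton_iff]
  constructor
  · rintro ⟨f, hf, rfl⟩
    -- properties of each element
    have hS : ∀ i, 1 ≤ f i ∧ f i ≤ N ∧ Even (N - f i) ∧
        (N - f i = 0 ∨ (2 * t + 4 ≤ N - f i ∧ N - f i ≤ 4 * t + 4) ∨
          (4 * t + 8 ≤ N - f i ∧ N - f i ≤ 2 * α + 4 * t + 8)) := by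
      intro i
      rcases hf i with (⟨g, hg1, hg2, hg3⟩ | ⟨θ, h1, h2, h3⟩) | h3
      · exact ⟨by omega, by omega, ⟨α + 2 * t + 4 - g, by omega⟩, by omega⟩
      · exact ⟨by omega, by omega, ⟨2 * t + 2 - θ, by omega⟩, by omega⟩
      · simp only [Set.mem_singleton_iff] at h3
        exact ⟨by omega, by omega, ⟨0, by omega⟩, by omega⟩
    have hd_sum : ∑ i, (N - f i) = (ℓ : ℤ) * N - ∑ i, f i := by
      rw [Finset.sum_sub_distrib, Finset.sum_const, Finset.card_univ, Fintype.card_fin,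
        nsmul_eq_mul]
    have hDe : Even (∑ i, (N - f i)) :=
      Finset.even_sum _ fun i _ => (hS i).2.2.1
    have hxe : Even (∑ i, f i) := by
      obtain ⟨r, hr⟩ := hDe
      obtain ⟨s, hs⟩ := hℓNe
      exact ⟨s - r, by omega⟩
    have hlb : (ℓ : ℤ) ≤ ∑ i, f i := by
      calc (ℓ : ℤ) = ∑ _i : Fin ℓ, (1 : ℤ) := by
            rw [Finset.sum_const, Finset.card_univ, Fintype.card_fin, nsmul_eq_mul, mul_one]
        _ ≤ ∑ i, f i := Finset.sum_le_sum fun i _ => (hS i).1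
    have hub : ∑ i, f i ≤ (ℓ : ℤ) * N := by
      calc ∑ i, f i ≤ ∑ _i : Fin ℓ, N := Finset.sum_le_sum fun i _ => (hS i).2.1
        _ = (ℓ : ℤ) * N := by
            rw [Finset.sum_const, Finset.card_univ, Fintype.card_fin, nsmul_eq_mul]
    refine ⟨⟨hxe, hlb, hub⟩, ?_⟩
    rintro (⟨_, hf1, hf2⟩ | hf1)
    -- in both forbidden cases derive facts about D := ∑ (N - f i)
    all_goals {
      have hD2 : 2 ≤ ∑ i, (N - f i) := by rw [hd_sum]; omega
      have hDle : (∑ i, (N - f i)) ≤ 2 * t + 2 ∨ (∑ i, (N - f i)) = 4 * t + 6 := by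
        rw [hd_sum]; omega
      have hne : ∃ i₀, N - f i₀ ≠ 0 := by
        by_contra hc
        push_neg at hc
        have : ∑ i, (N - f i) = 0 := Finset.sum_eq_zero fun i _ => hc i
        omega
      obtain ⟨i₀, hi₀⟩ := hne
      have hi₀big : 2 * t + 4 ≤ N - f i₀ := by have := (hS i₀).2.2.2; omega
      have hsingle : N - f i₀ ≤ ∑ i, (N - f i) :=
        Finset.single_le_sum (f := fun i => N - f i)
          (fun i _ => by have := (hS i).2.1; omega) (Finset.mem_univ i₀)
      rcases hDle with hDle | hDeq
      · omega
      · -- D = 4t+6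
        have herase := Finset.add_sum_erase Finset.univ (fun i => N - f i) (Finset.mem_univ i₀)
        have hrest : ∑ i ∈ Finset.univ.erase i₀, (N - f i) ≤ 2 * t + 2 := by omega
        have hallz : ∀ j ∈ Finset.univ.erase i₀, N - f j = 0 := by
          intro j hj
          by_contra hc
          have hjbig : 2 * t + 4 ≤ N - f j := by have := (hS j).2.2.2; omega
          have : N - f j ≤ ∑ i ∈ Finset.univ.erase i₀, (N - f i) :=
            Finset.single_le_sum (f := fun i => N - f i)
              (fun i _ => by have := (hS i).2.1; omega) hj
          omega
        have : ∑ i ∈ Finset.univ.erase i₀, (N - f i) = 0 := Finset.sum_eq_zero hallz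
        have hval : N - f i₀ = 4 * t + 6 := by omega
        have := (hS i₀).2.2.2
        omega
    }
  · rintro ⟨⟨hxe, hlb, hub⟩, hforb⟩
    push_neg at hforb
    obtain ⟨hforb1, hforb2⟩ := hforb
    -- D := ℓN - x
    obtain ⟨r, hr⟩ := hxe
    have hDe : Even ((ℓ : ℤ) * N - x) := by
      obtain ⟨s, hs⟩ := hℓNe; exact ⟨s - r, by omega⟩
    obtain ⟨d, hd⟩ := hDe
    -- facts about D
    have hD0 : 0 ≤ (ℓ : ℤ) * N - x := by omega
    have hDnotsmall : ¬ (2 ≤ (ℓ : ℤ) * N - x ∧ (ℓ : ℤ) * N - x ≤ 2 * t + 2) := by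
      intro h
      have := hforb1 ⟨r, hr⟩ (by omega)
      omega
    have hDne : (ℓ : ℤ) * N - x ≠ 4 * t + 6 := fun h => hforb2 (by omega)
    rcases eq_or_lt_of_le hD0 with hD | hDpos
    · -- D = 0 : x = ℓ * N
      have hx : x = (ℓ : ℤ) * N := by omega
      rw [hx]
      exact const_mem hNS ℓ
    · have hD2 : 2 ≤ (ℓ : ℤ) * N - x := by omega
      have hDge : 2 * t + 4 ≤ (ℓ : ℤ) * N - x := by omega
      by_cases hcase : (ℓ : ℤ) * N - x ≤ 4 * t + 4
      · -- one element of I₂, rest N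
        have hI2 : N - ((ℓ : ℤ) * N - x) ∈ S :=
          Or.inl (Or.inr ⟨2 * t + 2 - d, by omega, by omega, by omega⟩)
        have hmem := add_mem (single_mem hI2) (const_mem hNS (ℓ - 1))
        rw [show 1 + (ℓ - 1) = ℓ by omega] at hmem
        have hcast : ((ℓ - 1 : ℕ) : ℤ) = (ℓ : ℤ) - 1 := by omega
        have hx : x = N - ((ℓ : ℤ) * N - x) + ((ℓ - 1 : ℕ) : ℤ) * N := by
          rw [hcast]; ring
        rw [hx]
        exact hmem
      · -- D ≥ 4t + 8 : k elements of I₁, rest N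
        push_neg at hcase
        have hD48 : 4 * t + 8 ≤ (ℓ : ℤ) * N - x := by omega
        have hDub : (ℓ : ℤ) * N - x ≤ (ℓ : ℤ) * (2 * α + 4 * t + 8) := by
          have : (ℓ : ℤ) * (2 * α + 4 * t + 8) = (ℓ : ℤ) * N - (ℓ : ℤ) * 1 := by ring
          omega
        obtain ⟨k, hk1, hk2, hk3, hk4⟩ :=
          exists_k ℓ ((ℓ : ℤ) * N - x) (2 * α + 4 * t + 8) (by omega) (by omega) hDub
        -- k * (4t+8) ≤ D
        have hklo : (k : ℤ) * (4 * t + 8) ≤ (ℓ : ℤ) * N - x := by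
          rcases eq_or_lt_of_le hk1 with hk | hk
          · have : (k : ℤ) = 1 := by exact_mod_cast hk.symm
            rw [this]; omega
          · have hk2' : (2 : ℤ) ≤ (k : ℤ) := by exact_mod_cast hk
            have hexp : ((k : ℤ) - 1) * (2 * α + 4 * t + 8) =
                ((k : ℤ) - 1) * (2 * α) + (k : ℤ) * (4 * t + 8) - (4 * t + 8) := by ring
            have h2a : 2 * α ≤ ((k : ℤ) - 1) * (2 * α) :=
              le_mul_of_one_le_left (by omega) (by omega)
            omega
        -- E' with 2 E' = k(2α+4t+8) - D
        set E : ℤ := (k : ℤ) * (α + 2 * t + 4) - d with hE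
        have hE2 : 2 * E = (k : ℤ) * (2 * α + 4 * t + 8) - ((ℓ : ℤ) * N - x) := by
          have h2 : 2 * ((k : ℤ) * (α + 2 * t + 4)) = (k : ℤ) * (2 * α + 4 * t + 8) := by ring
          rw [hE]; omega
        have hE0 : 0 ≤ E := by omega
        have hEub : E ≤ (k : ℤ) * α := by
          have : (k : ℤ) * (2 * α + 4 * t + 8) = (k : ℤ) * (2 * α) + (k : ℤ) * (4 * t + 8) := by
            ring
          have h2 : 2 * ((k : ℤ) * α) = (k : ℤ) * (2 * α) := by ring
          omega
        have hap := ap_mem 1 α (by omega) k E hE0 hEub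
        have hsub : {y : ℤ | ∃ j : ℤ, 0 ≤ j ∧ j ≤ α ∧ y = 1 + 2 * j} ⊆ S := by
          rintro y ⟨j, hj1, hj2, hj3⟩
          exact Or.inl (Or.inl ⟨j, hj1, hj2, by omega⟩)
        have hA : (k : ℤ) * 1 + 2 * E ∈ sumset k S := sumset_mono hsub k hap
        have hB : ((ℓ - k : ℕ) : ℤ) * N ∈ sumset (ℓ - k) S := const_mem hNS (ℓ - k)
        have hAB := add_mem hA hB
        rw [Nat.add_sub_cancel' hk2] at hAB
        have hx : x = ((k : ℤ) * 1 + 2 * E) + ((ℓ - k : ℕ) : ℤ) * N := by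
          have hcast : ((ℓ - k : ℕ) : ℤ) = (ℓ : ℤ) - (k : ℤ) := by omega
          rw [hcast, hE2, hN]
          ring
        rw [hx]
        exact hAB
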